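/- Let E be a real inner product space (finite dimensional, or a real Hilbert space), let f : E → ℝ be L-smooth with L > 0 and bounded below by f*, and let 0 < η < 2/L. Define gradient descent iterates x_{t+1} = x_t − η·∇f(x_t) from x₀. Then for every T ≥ 1, the smallest gradient norm among the first T iterates satisfies min_{0≤t<T} ‖∇f(x_t)‖² ≤ (f(x₀) − f*) / (T·η·(1 − Lη/2)); in particular, for every threshold τ > 0 there exists a finite T such that min_{0≤t<T} ‖∇f(x_t)‖ ≤ τ. -/

import Mathlib

open InnerProductSpace

/-- Descent lemma: quadratic upper bound from Lipschitz gradient. -/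
lemma smooth_quadratic_upper_bound
    {E : Type*} [NormedAddCommGroup E] [InnerProductSpace ℝ E] [CompleteSpace E]
    (f : E → ℝ) (f' : E → E) (L : ℝ)
    (hdiff : ∀ x, HasGradientAt f (f' x) x)
    (hlip : ∀ x y, ‖f' x - f' y‖ ≤ L * ‖x - y‖) (a b : E) :
    f b ≤ f a + inner ℝ (f' a) (b - a) + L / 2 * ‖b - a‖ ^ 2 := by
  set v := b - a with hv
  set φ : ℝ → ℝ := fun t => f (a + t • v) - t * inner ℝ (f' a) v - L * t ^ 2 / 2 * ‖v‖ ^ 2 with hφ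
  have hc : ∀ t : ℝ, HasDerivAt (fun s : ℝ => a + s • v) v t := by
    intro t
    simpa using ((hasDerivAt_id t).smul_const v).const_add a
  have hφ' : ∀ t : ℝ, HasDerivAt φ
      ((inner ℝ (f' (a + t • v)) v : ℝ) - inner ℝ (f' a) v - L * t * ‖v‖ ^ 2) t := by
    intro t
    have h1 : HasDerivAt (fun s : ℝ => f (a + s • v)) (inner ℝ (f' (a + t • v)) v : ℝ) t := by
      have := (hdiff (a + t • v)).hasFDerivAt.comp_hasDerivAt t (hc t)
      simp [toDual_apply_apply] at this
      exact this
    have h2 : HasDerivAt (fun s : ℝ => s * inner ℝ (f' a) v) (inner ℝ (f' a) v : ℝ) t := by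
      simpa using (hasDerivAt_id t).mul_const (inner ℝ (f' a) v : ℝ)
    have h3 : HasDerivAt (fun s : ℝ => L * s ^ 2 / 2 * ‖v‖ ^ 2) (L * t * ‖v‖ ^ 2) t := by
      have : HasDerivAt (fun s : ℝ => s ^ 2) (2 * t) t := by
        simpa using hasDerivAt_pow 2 t
      have := (((this.const_mul L).div_const 2).mul_const (‖v‖ ^ 2))
      exact this.congr_deriv (by ring)
    exact (h1.sub h2).sub h3
  have hanti : AntitoneOn φ (Set.Icc (0 : ℝ) 1) := by
    apply antitoneOn_of_deriv_nonpos (convex_Icc 0 1)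
    · exact fun t _ => ((hφ' t).continuousAt).continuousWithinAt
    · exact fun t _ => ((hφ' t).differentiableAt).differentiableWithinAt
    · intro t ht
      rw [interior_Icc] at ht
      rw [(hφ' t).deriv]
      have hinner : (inner ℝ (f' (a + t • v)) v : ℝ) - inner ℝ (f' a) v
          = inner ℝ (f' (a + t • v) - f' a) v := by rw [inner_sub_left]
      rw [hinner]
      have h1 : (inner ℝ (f' (a + t • v) - f' a) v : ℝ) ≤ ‖f' (a + t • v) - f' a‖ * ‖v‖ :=
        real_inner_le_norm _ _
      have h2 : ‖f' (a + t • v) - f' a‖ ≤ L * (t * ‖v‖) := by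
        have := hlip (a + t • v) a
        simpa [norm_smul, abs_of_pos ht.1, mul_assoc] using this
      nlinarith [norm_nonneg v, mul_le_mul_of_nonneg_right h2 (norm_nonneg v), ht.1]
  have := hanti (Set.left_mem_Icc.mpr zero_le_one) (Set.right_mem_Icc.mpr zero_le_one) zero_le_one
  simp only [hφ, one_smul, zero_smul, add_zero] at this
  have hb : a + v = b := by rw [hv]; abel
  rw [hb] at this
  nlinarith [this]

/-- If `f : E → ℝ` is `L`-smooth with `L > 0`, bounded below by `fstar`, and
`0 < η < 2 / L`, then for the gradient descent iterates
`x (t+1) = x t - η • f' (x t)`, for every `T ≥ 1` the smallest squared gradient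
norm among the first `T` iterates satisfies
`min_{0 ≤ t < T} ‖f' (x t)‖² ≤ (f (x 0) - fstar) / (T * η * (1 - L * η / 2))`;
in particular, for every threshold `τ > 0` there exists a finite `T ≥ 1` with
`min_{0 ≤ t < T} ‖f' (x t)‖ ≤ τ`. -/
theorem gradient_descent_min_grad_bound
    {E : Type*} [NormedAddCommGroup E] [InnerProductSpace ℝ E] [CompleteSpace E]
    (f : E → ℝ) (f' : E → E) (L : ℝ) (hL : 0 < L)
    (hdiff : ∀ x, HasGradientAt f (f' x) x)
    (hlip : ∀ x y, ‖f' x - f' y‖ ≤ L * ‖x - y‖)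
    (fstar : ℝ) (hbdd : ∀ x, fstar ≤ f x)
    (η : ℝ) (hη : 0 < η) (hη' : η < 2 / L)
    (x : ℕ → E) (hx : ∀ t, x (t + 1) = x t - η • f' (x t)) :
    (∀ T, ∀ hT : 1 ≤ T,
      (Finset.range T).inf'
          (Finset.nonempty_range_iff.mpr (Nat.one_le_iff_ne_zero.mp hT))
          (fun t => ‖f' (x t)‖ ^ 2) ≤
        (f (x 0) - fstar) / ((T : ℝ) * η * (1 - L * η / 2))) ∧
    ∀ τ : ℝ, 0 < τ → ∃ T, ∃ hT : 1 ≤ T,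
      (Finset.range T).inf'
          (Finset.nonempty_range_iff.mpr (Nat.one_le_iff_ne_zero.mp hT))
          (fun t => ‖f' (x t)‖) ≤ τ := by
  set c : ℝ := η * (1 - L * η / 2) with hc
  have hc_pos : 0 < c := by
    have h2 : η * L < 2 := (lt_div_iff₀ hL).mp hη'
    apply mul_pos hη
    nlinarith
  -- one-step descent
  have hstep : ∀ t, c * ‖f' (x t)‖ ^ 2 ≤ f (x t) - f (x (t + 1)) := by
    intro t
    have := smooth_quadratic_upper_bound f f' L hdiff hlip (x t) (x (t + 1))
    rw [hx t] at this
    have hba : x t - η • f' (x t) - x t = -(η • f' (x t)) := by abel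
    rw [hba] at this
    have h1 : (inner ℝ (f' (x t)) (-(η • f' (x t))) : ℝ) = -(η * ‖f' (x t)‖ ^ 2) := by
      rw [inner_neg_right, real_inner_smul_right, real_inner_self_eq_norm_sq]
    have h2 : ‖-(η • f' (x t))‖ ^ 2 = η ^ 2 * ‖f' (x t)‖ ^ 2 := by
      simp [norm_smul, abs_of_pos hη, mul_pow]
    rw [h1, h2] at this
    rw [hc, hx t]
    nlinarith [this]
  -- telescoping sum
  have hsum : ∀ T : ℕ, (Finset.range T).sum (fun t => c * ‖f' (x t)‖ ^ 2)
      ≤ f (x 0) - fstar := by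
    intro T
    calc (Finset.range T).sum (fun t => c * ‖f' (x t)‖ ^ 2)
        ≤ (Finset.range T).sum (fun t => f (x t) - f (x (t + 1))) :=
          Finset.sum_le_sum fun t _ => hstep t
      _ = f (x 0) - f (x T) := by
          rw [← Finset.sum_range_sub' (fun t => f (x t)) T]
      _ ≤ f (x 0) - fstar := by linarith [hbdd (x T)]
  have hmin : ∀ T, ∀ hT : 1 ≤ T,
      (Finset.range T).inf'
          (Finset.nonempty_range_iff.mpr (Nat.one_le_iff_ne_zero.mp hT))
          (fun t => ‖f' (x t)‖ ^ 2) ≤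
        (f (x 0) - fstar) / ((T : ℝ) * η * (1 - L * η / 2)) := by
    intro T hT
    set ne := Finset.nonempty_range_iff.mpr (Nat.one_le_iff_ne_zero.mp hT)
    set m := (Finset.range T).inf' ne (fun t => ‖f' (x t)‖ ^ 2) with hm
    have hTpos : (0 : ℝ) < T := by exact_mod_cast hT
    have hcard : (T : ℝ) * (c * m) ≤ f (x 0) - fstar := by
      have h1 : (Finset.range T).card • (c * m)
          ≤ (Finset.range T).sum (fun t => c * ‖f' (x t)‖ ^ 2) := by
        apply Finset.card_nsmul_le_sum
        intro i hi
        exact mul_le_mul_of_nonneg_left (Finset.inf'_le _ hi) hc_pos.le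
      rw [Finset.card_range, nsmul_eq_mul] at h1
      exact h1.trans (hsum T)
    rw [show (T : ℝ) * η * (1 - L * η / 2) = (T : ℝ) * c by rw [hc]; ring]
    rw [le_div_iff₀ (by positivity)]
    nlinarith [hcard]
  refine ⟨hmin, ?_⟩
  intro τ hτ
  obtain ⟨n, hn⟩ := exists_nat_gt ((f (x 0) - fstar) / (c * τ ^ 2))
  refine ⟨max n 1, le_max_right _ _, ?_⟩
  set T := max n 1 with hTdef
  have hT : 1 ≤ T := le_max_right _ _
  set ne := Finset.nonempty_range_iff.mpr (Nat.one_le_iff_ne_zero.mp hT)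
  have hTpos : (0 : ℝ) < T := by exact_mod_cast hT
  have hbound : (f (x 0) - fstar) / ((T : ℝ) * η * (1 - L * η / 2)) ≤ τ ^ 2 := by
    have hTn : (n : ℝ) ≤ T := by exact_mod_cast le_max_left n 1
    have h1 : (f (x 0) - fstar) / (c * τ ^ 2) < T := lt_of_lt_of_le hn hTn
    have h2 : f (x 0) - fstar < T * (c * τ ^ 2) := by
      rw [div_lt_iff₀ (by positivity)] at h1
      linarith
    rw [show (T : ℝ) * η * (1 - L * η / 2) = (T : ℝ) * c by rw [hc]; ring]
    rw [div_le_iff₀ (by positivity)]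
    nlinarith
  have hmin' := (hmin T hT).trans hbound
  obtain ⟨t, ht, hteq⟩ := Finset.exists_mem_eq_inf' ne (fun t => ‖f' (x t)‖ ^ 2)
  have htle : ‖f' (x t)‖ ^ 2 ≤ τ ^ 2 := by rw [← hteq]; exact hmin'
  have htn : ‖f' (x t)‖ ≤ τ := by nlinarith [norm_nonneg (f' (x t))]
  exact (Finset.inf'_le _ ht).trans htn
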